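/- Call a finite sequence M = (m_0, …, m_{n−1}) of nonnegative integers proto-characteristic if: m_0 = 0; there is k_1 with 1 ≤ k_1 ≤ n−1 such that m_1 = … = m_{k_1} = 1 and m_{k_1+1} > 1 if k_1 < n−1; M is non-decreasing; and (if k_1 < n−1) there exist functions t_1, t_2 : {k_1+1,…,n−1} → {1,…,n−1} with m_{t_1(k)} + m_{t_2(k)} = m_k, t_1(k), t_2(k) < k for all k, and for all k_1 < h_1 < h_2 < n at least one of t_1(h_1) < t_1(h_2) or t_2(h_1) < t_2(h_2) holds. Theorem: if (m_0,…,m_{n−1}) is proto-characteristic, then so is (0, 1, m_1, …, m_{n−1}) (a sequence of length n+1). -/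

import Mathlib

/-- A sequence `(m 0, …, m (n-1))` of nonnegative integers is proto-characteristic if:
`m 0 = 0`; there is `k₁` with `1 ≤ k₁ ≤ n - 1`, `m 1 = … = m k₁ = 1` and `m (k₁+1) > 1`
if `k₁ < n - 1`; the sequence is non-decreasing; and (if `k₁ < n - 1`) there are
functions `t₁, t₂ : {k₁+1,…,n-1} → {1,…,n-1}` with `m (t₁ k) + m (t₂ k) = m k`,
`t₁ k, t₂ k < k`, and for `k₁ < h₁ < h₂ < n` at least one of `t₁ h₁ < t₁ h₂`,
`t₂ h₁ < t₂ h₂` holds. -/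
def ProtoChar (n : ℕ) (m : ℕ → ℕ) : Prop :=
  2 ≤ n ∧ m 0 = 0 ∧
  ∃ k₁ : ℕ, 1 ≤ k₁ ∧ k₁ ≤ n - 1 ∧ (∀ i : ℕ, 1 ≤ i → i ≤ k₁ → m i = 1) ∧
    (k₁ < n - 1 → 1 < m (k₁ + 1)) ∧
    (∀ i j : ℕ, i ≤ j → j ≤ n - 1 → m i ≤ m j) ∧
    (k₁ < n - 1 → ∃ t₁ t₂ : ℕ → ℕ,
      (∀ k : ℕ, k₁ < k → k < n →
        1 ≤ t₁ k ∧ t₁ k ≤ n - 1 ∧ 1 ≤ t₂ k ∧ t₂ k ≤ n - 1 ∧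
        m (t₁ k) + m (t₂ k) = m k ∧ t₁ k < k ∧ t₂ k < k) ∧
      (∀ h₁ h₂ : ℕ, k₁ < h₁ → h₁ < h₂ → h₂ < n → t₁ h₁ < t₁ h₂ ∨ t₂ h₁ < t₂ h₂))

/-- Inserting a 1 after the initial 0 of a proto-characteristic sequence of length
`n` yields a proto-characteristic sequence of length `n + 1`:
`(0, 1, m 1, …, m (n-1))` is proto-characteristic. -/
theorem protoChar_insert_one (n : ℕ) (m : ℕ → ℕ) (h : ProtoChar n m) :
    ProtoChar (n + 1) (fun i => if i = 0 then 0 else if i = 1 then 1 else m (i - 1)) := by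
  obtain ⟨hn, hm0, k₁, hk1, hk2, hones, hgt, hmono, hrec⟩ := h
  set m' : ℕ → ℕ := fun i => if i = 0 then 0 else if i = 1 then 1 else m (i - 1) with hm'
  have hm'eq : ∀ i : ℕ, 1 ≤ i → m' (i + 1) = m i := by
    intro i hi
    simp only [hm']
    rcases Nat.eq_or_lt_of_le hi with h1 | h1
    · simp [← h1]
    · have : i + 1 ≠ 1 := by omega
      simp [this]
      omega
  have hm'1 : m' 1 = 1 := by simp [hm']
  have hm1 : m 1 = 1 := hones 1 le_rfl hk1
  refine ⟨by omega, by simp [hm'], k₁ + 1, by omega, by omega, ?_, ?_, ?_, ?_⟩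
  · intro i hi hik
    rcases Nat.eq_or_lt_of_le hi with h1 | h1
    · simp [hm', ← h1]
    · have : i - 1 + 1 = i := by omega
      rw [← this, hm'eq _ (by omega)]
      exact hones _ (by omega) (by omega)
  · intro hk
    rw [show k₁ + 1 + 1 = (k₁ + 1) + 1 from rfl, hm'eq _ (by omega)]
    exact hgt (by omega)
  · intro i j hij hj
    have hj' : j ≤ n := by omega
    rcases Nat.eq_zero_or_pos i with h0 | h0
    · simp [hm', h0]
    rcases Nat.eq_or_lt_of_le h0 with h1 | h1
    · -- i = 1
      rcases Nat.eq_or_lt_of_le hij with h2 | h2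
      · rw [h2]
      · rw [← h1, hm'1]
        have : j - 1 + 1 = j := by omega
        rw [← this, hm'eq _ (by omega)]
        calc 1 = m 1 := hm1.symm
        _ ≤ m (j - 1) := hmono 1 (j - 1) (by omega) (by omega)
    · have hi' : i - 1 + 1 = i := by omega
      have hjj : j - 1 + 1 = j := by omega
      rw [← hi', ← hjj, hm'eq _ (by omega), hm'eq _ (by omega)]
      exact hmono _ _ (by omega) (by omega)
  · intro hk
    have hk' : k₁ < n - 1 := by omega
    obtain ⟨t₁, t₂, ht, hcomp⟩ := hrec hk'
    refine ⟨fun k => t₁ (k - 1) + 1, fun k => t₂ (k - 1) + 1, ?_, ?_⟩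
    · intro k hk1' hk2'
      obtain ⟨a1, a2, a3, a4, a5, a6, a7⟩ := ht (k - 1) (by omega) (by omega)
      simp only [Nat.add_sub_cancel]
      refine ⟨by omega, by omega, by omega, by omega, ?_, by omega, by omega⟩
      rw [hm'eq _ a1, hm'eq _ a3]
      have : k - 1 + 1 = k := by omega
      rw [← this, hm'eq _ (by omega)]
      exact a5
    · intro h₁ h₂ hh1 hh2 hh3
      simp only []
      rcases hcomp (h₁ - 1) (h₂ - 1) (by omega) (by omega) (by omega) with h | h
      · exact Or.inl (by omega)
      · exact Or.inr (by omega)
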